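/- Let D' be a balanced bipartite digraph with colour classes X' and Y' of cardinality a' = 2, containing a complete matching M' from X' to Y', and satisfying: d(x') + d(y') + d(x'') + d(y'') ≥ 6a' + 2 for all pairwise distinct x', x'' ∈ X', y', y'' ∈ Y' such that D' contains M'-compatible paths from x' to y' and from x'' to y''. Then D' contains a cycle of length 4 compatible with some complete matching from X' to Y'. -/

import Mathlib

namespace BipDigraph

variable {V : Type}

/-- Out-degree of `v` in the digraph `(V, A)`. -/
noncomputable def outdeg (A : V → V → Prop) (v : V) : ℕ := Nat.card {w : V // A v w}

/-- In-degree of `v` in the digraph `(V, A)`. -/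
noncomputable def indeg (A : V → V → Prop) (v : V) : ℕ := Nat.card {w : V // A w v}

/-- Degree of `v`: out-degree plus in-degree. -/
noncomputable def deg (A : V → V → Prop) (v : V) : ℕ := outdeg A v + indeg A v

/-- Out-degree of `v` relative to the vertex set `S`. -/
noncomputable def outdegIn (A : V → V → Prop) (S : Set V) (v : V) : ℕ := Nat.card {w : V // w ∈ S ∧ A v w}

/-- In-degree of `v` relative to the vertex set `S`. -/
noncomputable def indegIn (A : V → V → Prop) (S : Set V) (v : V) : ℕ := Nat.card {w : V // w ∈ S ∧ A w v}

/-- Degree of `v` relative to the vertex set `S`. -/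
noncomputable def degIn (A : V → V → Prop) (S : Set V) (v : V) : ℕ := outdegIn A S v + indegIn A S v

/-- The arc `(u,v)` belongs to the matching given by the function `M` on the class `X`. -/
def InM (X : Finset V) (M : V → V) (u v : V) : Prop := u ∈ X ∧ M u = v

/-- The arc `(u,v)` is an arc of the digraph not belonging to the matching. -/
def NotM (A : V → V → Prop) (X : Finset V) (M : V → V) (u v : V) : Prop :=
  A u v ∧ ¬ InM X M u v

/-- `M` is a complete matching from `X` to `Y`: every `x ∈ X` is matched along an arc
to a vertex of `Y`, and the matching arcs are independent. -/
def CompleteMatching (A : V → V → Prop) (X Y : Finset V) (M : V → V) : Prop :=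
  (∀ x ∈ X, M x ∈ Y ∧ A x (M x)) ∧ Set.InjOn M X

/-- Consecutive arcs of the list alternately satisfy `P` and `Q`, starting with `P`. -/
def Alt (P Q : V → V → Prop) : List V → Prop
  | [] => True
  | [_] => True
  | a :: b :: t => P a b ∧ Alt Q P (b :: t)

/-- `p` is an oriented path in `(V, A)` whose arcs are alternately in the matching `M`
(on `X`) and outside of it. -/
def IsCompatPath (A : V → V → Prop) (X : Finset V) (M : V → V) (p : List V) : Prop :=
  p ≠ [] ∧ p.Nodup ∧ p.Chain' A ∧
    (Alt (InM X M) (NotM A X M) p ∨ Alt (NotM A X M) (InM X M) p)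

/-- An `M`-compatible oriented path from `u` to `v`. -/
def IsCompatPathFromTo (A : V → V → Prop) (X : Finset V) (M : V → V)
    (p : List V) (u v : V) : Prop :=
  IsCompatPath A X M p ∧ p.head? = some u ∧ p.getLast? = some v

/-- `p` lists the vertices of an oriented cycle of `(V, A)` in cyclic order;
its length (number of arcs = number of vertices) is `p.length`. -/
def IsCycle (A : V → V → Prop) (p : List V) : Prop :=
  2 ≤ p.length ∧ p.Nodup ∧ ∃ u, p.head? = some u ∧ List.Chain' A (p ++ [u])

/-- `p` is an oriented cycle whose arcs are alternately in the matching `M` (on `X`)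
and outside of it. -/
def IsCompatCycle (A : V → V → Prop) (X : Finset V) (M : V → V) (p : List V) : Prop :=
  2 ≤ p.length ∧ p.Nodup ∧ ∃ u, p.head? = some u ∧ List.Chain' A (p ++ [u]) ∧
    (Alt (InM X M) (NotM A X M) (p ++ [u]) ∨ Alt (NotM A X M) (InM X M) (p ++ [u]))

/-- The digraph `(V, A)` contains an oriented cycle of length `n`. -/
def HasCycleOfLength (A : V → V → Prop) (n : ℕ) : Prop :=
  ∃ p : List V, IsCycle A p ∧ p.length = n

/-- `(V, A)` is a balanced bipartite digraph with colour classes `X`, `Y` of cardinality `a`. -/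
def BalancedBipartite (A : V → V → Prop) (X Y : Finset V) (a : ℕ) : Prop :=
  X.card = a ∧ Y.card = a ∧ Disjoint X Y ∧ (∀ v : V, v ∈ X ∨ v ∈ Y) ∧
    ∀ u v : V, A u v → (u ∈ X ∧ v ∈ Y) ∨ (u ∈ Y ∧ v ∈ X)

/-- Condition (M): `d(u) + d(v) ≥ 3a + 1` for every pair of distinct vertices `u, v`
with no arc between them in either direction. -/
def CondM (A : V → V → Prop) (a : ℕ) : Prop :=
  ∀ u v : V, u ≠ v → ¬ A u v → ¬ A v u → 3 * a + 1 ≤ deg A u + deg A v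

/-- Condition (A): `d(x') + d(y') + d(x'') + d(y'') ≥ 6a + 2` for all pairwise distinct
`x', x'' ∈ X`, `y', y'' ∈ Y` joined by `M`-compatible paths from `x'` to `y'` and from
`x''` to `y''`. -/
def CondA (A : V → V → Prop) (X Y : Finset V) (M : V → V) (a : ℕ) : Prop :=
  ∀ x' x'' y' y'' : V, x' ∈ X → x'' ∈ X → y' ∈ Y → y'' ∈ Y → x' ≠ x'' → y' ≠ y'' →
    (∃ p, IsCompatPathFromTo A X M p x' y') → (∃ p, IsCompatPathFromTo A X M p x'' y'') →
    6 * a + 2 ≤ deg A x' + deg A y' + deg A x'' + deg A y''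

/-- An `M`-compatible cycle all of whose vertices lie in `S`. -/
def IsCompatCycleIn (A : V → V → Prop) (X : Finset V) (M : V → V) (S : Set V)
    (p : List V) : Prop :=
  IsCompatCycle A X M p ∧ ∀ v ∈ p, v ∈ S

/-- An `M`-compatible path from `u` to `v` all of whose vertices lie in `S`. -/
def IsCompatPathFromToIn (A : V → V → Prop) (X : Finset V) (M : V → V) (S : Set V)
    (p : List V) (u v : V) : Prop :=
  IsCompatPathFromTo A X M p u v ∧ ∀ w ∈ p, w ∈ S

/-- The digraph `(V, A)` is strongly connected. -/
def StronglyConnected (A : V → V → Prop) : Prop :=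
  ∀ u v : V, u ≠ v →
    ∃ p : List V, p.Chain' A ∧ p.head? = some u ∧ p.getLast? = some v

open Classical in
/-- Indicator of a proposition. -/
noncomputable def bb (P : Prop) : ℕ := if P then 1 else 0

lemma bb_le_one (P : Prop) : bb P ≤ 1 := by
  unfold bb; split <;> omega

lemma bb_of_not {P : Prop} (h : ¬ P) : bb P = 0 := by
  unfold bb; split <;> simp_all

lemma card_pred_pair {a b : V} (hab : a ≠ b) (P : V → Prop)
    (h : ∀ w, P w → w = a ∨ w = b) :
    Nat.card {w : V // P w} = bb (P a) + bb (P b) := by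
  classical
  have key : Nat.card {w : V // P w} = ({w : V | P w}).ncard :=
    Nat.card_coe_set_eq _
  by_cases ha : P a <;> by_cases hb : P b
  · have : {w : V | P w} = {a, b} := by
      ext w; constructor
      · exact h w
      · rintro (rfl | rfl) <;> assumption
    rw [key, this, Set.ncard_pair hab, bb, bb, if_pos ha, if_pos hb]
  · have : {w : V | P w} = {a} := by
      ext w; constructor
      · intro hw; rcases h w hw with rfl | rfl
        · rfl
        · exact absurd hw hb
      · rintro rfl; assumption
    rw [key, this, Set.ncard_singleton, bb, bb, if_pos ha, if_neg hb]
  · have : {w : V | P w} = {b} := by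
      ext w; constructor
      · intro hw; rcases h w hw with rfl | rfl
        · exact absurd hw ha
        · rfl
      · rintro rfl; assumption
    rw [key, this, Set.ncard_singleton, bb, bb, if_neg ha, if_pos hb]
  · have : {w : V | P w} = ∅ := by
      ext w; constructor
      · intro hw; rcases h w hw with rfl | rfl
        · exact absurd hw ha
        · exact absurd hw hb
      · rintro ⟨⟩
    rw [key, this, Set.ncard_empty, bb, bb, if_neg ha, if_neg hb]

/-- a balanced bipartite digraph with classes of cardinality `2`, possessing
a complete matching `M'` from `X'` to `Y'` and satisfying condition (A), contains a cycle
of length 4 compatible with some complete matching from `X'` to `Y'`. -/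
theorem stmt5 {V : Type} [Fintype V] [DecidableEq V] (A : V → V → Prop)
    (X Y : Finset V) (hbb : BalancedBipartite A X Y 2)
    (M : V → V) (hmatch : CompleteMatching A X Y M)
    (hA : CondA A X Y M 2) :
    ∃ M' : V → V, CompleteMatching A X Y M' ∧
      ∃ p : List V, IsCompatCycle A X M' p ∧ p.length = 4 := by
  classical
  obtain ⟨hXcard, hYcard, hdisj, hcover, harcs⟩ := hbb
  obtain ⟨hmem, hinj⟩ := hmatch
  obtain ⟨x1, x2, hx12, hXeq⟩ := Finset.card_eq_two.mp hXcard
  have hx1X : x1 ∈ X := by rw [hXeq]; simp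
  have hx2X : x2 ∈ X := by rw [hXeq]; simp
  set y1 := M x1 with hy1def
  set y2 := M x2 with hy2def
  have hy1Y : y1 ∈ Y := (hmem x1 hx1X).1
  have hy2Y : y2 ∈ Y := (hmem x2 hx2X).1
  have hAx1y1 : A x1 y1 := (hmem x1 hx1X).2
  have hAx2y2 : A x2 y2 := (hmem x2 hx2X).2
  have hy12 : y1 ≠ y2 := fun h => hx12 (hinj hx1X hx2X h)
  have hXY : ∀ v, v ∈ X → v ∉ Y := fun v hv => Finset.disjoint_left.mp hdisj hv
  have hYX : ∀ v, v ∈ Y → v ∉ X := fun v hv hv' => hXY v hv' hv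
  have hYeq : Y = {y1, y2} := by
    refine (Finset.eq_of_subset_of_card_le ?_ ?_).symm
    · intro w hw
      rcases Finset.mem_insert.mp hw with rfl | hw
      · exact hy1Y
      · rw [Finset.mem_singleton] at hw; subst hw; exact hy2Y
    · rw [hYcard, Finset.card_insert_of_notMem (by simpa using hy12),
        Finset.card_singleton]
  have hYmem : ∀ w ∈ Y, w = y1 ∨ w = y2 := by
    intro w hw; rw [hYeq] at hw; simpa using hw
  have hXmem : ∀ w ∈ X, w = x1 ∨ w = x2 := by
    intro w hw; rw [hXeq] at hw; simpa using hw
  have hx1y1 : x1 ≠ y1 := fun h => hXY x1 hx1X (h ▸ hy1Y)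
  have hx1y2 : x1 ≠ y2 := fun h => hXY x1 hx1X (h ▸ hy2Y)
  have hx2y1 : x2 ≠ y1 := fun h => hXY x2 hx2X (h ▸ hy1Y)
  have hx2y2 : x2 ≠ y2 := fun h => hXY x2 hx2X (h ▸ hy2Y)
  have hy1X : y1 ∉ X := hYX y1 hy1Y
  have hy2X : y2 ∉ X := hYX y2 hy2Y
  -- the two trivial compatible paths
  have hp1 : ∃ p, IsCompatPathFromTo A X M p x1 y1 := by
    refine ⟨[x1, y1], ⟨by simp, by simp [hx1y1], by simp [List.Chain', hAx1y1], Or.inl ?_⟩, by simp, by simp⟩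
    exact ⟨⟨hx1X, rfl⟩, trivial⟩
  have hp2 : ∃ p, IsCompatPathFromTo A X M p x2 y2 := by
    refine ⟨[x2, y2], ⟨by simp, by simp [hx2y2], by simp [List.Chain', hAx2y2], Or.inl ?_⟩, by simp, by simp⟩
    exact ⟨⟨hx2X, rfl⟩, trivial⟩
  have h14 : 14 ≤ deg A x1 + deg A y1 + deg A x2 + deg A y2 := by
    have := hA x1 x2 y1 y2 hx1X hx2X hy1Y hy2Y hx12 hy12 hp1 hp2
    omega
  -- degree computations
  have houtX : ∀ v ∈ X, outdeg A v = bb (A v y1) + bb (A v y2) := by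
    intro v hv
    refine card_pred_pair hy12 _ (fun w hw => ?_)
    rcases harcs v w hw with ⟨_, hwY⟩ | ⟨hvY, _⟩
    · exact hYmem w hwY
    · exact absurd hvY (hXY v hv)
  have hinX : ∀ v ∈ X, indeg A v = bb (A y1 v) + bb (A y2 v) := by
    intro v hv
    refine card_pred_pair hy12 _ (fun w hw => ?_)
    rcases harcs w v hw with ⟨_, hvY⟩ | ⟨hwY, _⟩
    · exact absurd hvY (hXY v hv)
    · exact hYmem w hwY
  have houtY : ∀ v ∈ Y, outdeg A v = bb (A v x1) + bb (A v x2) := by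
    intro v hv
    refine card_pred_pair hx12 _ (fun w hw => ?_)
    rcases harcs v w hw with ⟨hvX, _⟩ | ⟨_, hwX⟩
    · exact absurd hvX (hYX v hv)
    · exact hXmem w hwX
  have hinY : ∀ v ∈ Y, indeg A v = bb (A x1 v) + bb (A x2 v) := by
    intro v hv
    refine card_pred_pair hx12 _ (fun w hw => ?_)
    rcases harcs w v hw with ⟨hwX, _⟩ | ⟨_, hvX⟩
    · exact hXmem w hwX
    · exact absurd hvX (hYX v hv)
  have hsum : deg A x1 + deg A y1 + deg A x2 + deg A y2 =
      2 * (bb (A x1 y1) + bb (A x1 y2) + bb (A x2 y1) + bb (A x2 y2) +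
        bb (A y1 x1) + bb (A y1 x2) + bb (A y2 x1) + bb (A y2 x2)) := by
    simp only [deg, houtX x1 hx1X, hinX x1 hx1X, houtX x2 hx2X, hinX x2 hx2X,
      houtY y1 hy1Y, hinY y1 hy1Y, houtY y2 hy2Y, hinY y2 hy2Y]
    ring
  have hb1 := bb_le_one (A x1 y1)
  have hb2 := bb_le_one (A x1 y2)
  have hb3 := bb_le_one (A x2 y1)
  have hb4 := bb_le_one (A x2 y2)
  have hb5 := bb_le_one (A y1 x1)
  have hb6 := bb_le_one (A y1 x2)
  have hb7 := bb_le_one (A y2 x1)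
  have hb8 := bb_le_one (A y2 x2)
  by_cases hcase : A y1 x2 ∧ A y2 x1
  · -- cycle compatible with M itself
    obtain ⟨h1, h2⟩ := hcase
    refine ⟨M, ⟨hmem, hinj⟩, [x1, y1, x2, y2], ⟨by simp, ?_, x1, by simp, ?_, Or.inl ?_⟩, by simp⟩
    · simp [hx1y1, hx12, hx1y2, hx2y1, hy12, hx2y2, Ne.symm hx2y1]
    · simp [List.Chain', hAx1y1, h1, hAx2y2, h2]
    · exact ⟨⟨hx1X, rfl⟩, ⟨h1, fun hc => hy1X hc.1⟩, ⟨hx2X, rfl⟩, ⟨h2, fun hc => hy2X hc.1⟩,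
        trivial⟩
  · by_cases hswap : A x1 y2 ∧ A x2 y1 ∧ A y1 x1 ∧ A y2 x2
    · -- cycle compatible with the swapped matching
      obtain ⟨s1, s2, s3, s4⟩ := hswap
      set M' : V → V := fun v => if v = x1 then y2 else if v = x2 then y1 else M v with hM'
      have hM'x1 : M' x1 = y2 := by simp [hM']
      have hM'x2 : M' x2 = y1 := by simp [hM', hx12, Ne.symm hx12]
      refine ⟨M', ⟨?_, ?_⟩, [x1, y2, x2, y1], ⟨by simp, ?_, x1, by simp, ?_, Or.inl ?_⟩, by simp⟩
      · intro x hx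
        rcases hXmem x hx with rfl | rfl
        · rw [hM'x1]; exact ⟨hy2Y, s1⟩
        · rw [hM'x2]; exact ⟨hy1Y, s2⟩
      · intro u hu v hv huv
        rcases hXmem u hu with rfl | rfl <;> rcases hXmem v hv with rfl | rfl
        · rfl
        · rw [hM'x1, hM'x2] at huv; exact absurd huv.symm hy12
        · rw [hM'x1, hM'x2] at huv; exact absurd huv hy12
        · rfl
      · simp [hx1y2, hx12, hx1y1, Ne.symm hx2y2, Ne.symm hy12.symm, hx2y1, hy12.symm]
      · simp [List.Chain', s1, s4, s2, s3]
      · exact ⟨⟨hx1X, hM'x1⟩, ⟨s4, fun hc => hy2X hc.1⟩, ⟨hx2X, hM'x2⟩,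
          ⟨s3, fun hc => hy1X hc.1⟩, trivial⟩
    · -- impossible: two distinct missing arcs contradict the degree condition
      exfalso
      rw [hsum] at h14
      have hmiss1 : ¬ A y1 x2 ∨ ¬ A y2 x1 := by tauto
      have hmiss2 : ¬ A x1 y2 ∨ ¬ A x2 y1 ∨ ¬ A y1 x1 ∨ ¬ A y2 x2 := by tauto
      rcases hmiss1 with h | h <;> have hz1 := bb_of_not h <;>
        rcases hmiss2 with h' | h' | h' | h' <;> have hz2 := bb_of_not h' <;> omega

end BipDigraph
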